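/- Let L be the (unsigned) graph Laplacian of G, with eigenvalues λ_1 ≤ … ≤ λ_{|V|} counted with multiplicity. Then: (1) for every ν-partition P̃ of G and every α ∈ ℝ^{∂P̃} with all entries positive, λ_ν ≤ Λ(P̃, α); (2) if ψ is a non-degenerate eigenvector of L with eigenvalue λ_ν having exactly ν nodal domains (Courant-sharp), and P is its nodal partition, then there exists α^c ∈ ℝ^{∂P} with all entries positive such that Λ(P, α^c) = λ_ν; hence the nodal partition of a Courant-sharp Laplacian eigenvector is a globally minimal ν-partition. -/

import Mathlib

open Matrix Finset

noncomputable section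

variable {V : Type*}

/-- The signed Laplacian of the weighted graph `(G,w)` with signature `σ`. -/
def signedLaplacian [Fintype V] [DecidableEq V] (G : SimpleGraph V) [DecidableRel G.Adj]
    (w σ : V → V → ℝ) : Matrix V V ℝ :=
  Matrix.of fun i j =>
    if i = j then ∑ k, if G.Adj i k then w i k else 0
    else if G.Adj i j then -(σ i j * w i j) else 0

/-- The `n`-th smallest eigenvalue (1-based, counted with multiplicity) of a real
symmetric matrix; junk value `0` if the matrix is not Hermitian or `n` is out of range. -/
def nthEigenvalue [Fintype V] [DecidableEq V] (A : Matrix V V ℝ) (n : ℕ) : ℝ :=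
  if h : A.IsHermitian ∧ n - 1 < Fintype.card V then
    let f : Fin (Fintype.card V) → ℝ := fun i => h.1.eigenvalues ((Fintype.equivFin V).symm i)
    f (Tuple.sort f ⟨n - 1, h.2⟩)
  else 0

/-- `μ` is a simple eigenvalue of `A`: its eigenspace is one-dimensional. -/
def IsSimpleEigenvalue [Fintype V] [DecidableEq V] (A : Matrix V V ℝ) (μ : ℝ) : Prop :=
  Module.finrank ℝ (Module.End.eigenspace (Matrix.toLin' A) μ) = 1

/-- The nodal set of `u` with respect to the signature `σ`, as a set of (unordered) edges. -/
def nodalEdges (G : SimpleGraph V) (σ : V → V → ℝ) (u : V → ℝ) : Set (Sym2 V) :=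
  {e | ∃ i j, e = s(i, j) ∧ G.Adj i j ∧ u i * σ i j * u j < 0}

/-- The number of nodal domains of `u` on `(G,σ)`: the number of connected components
of the spanning subgraph obtained by deleting the nodal set. -/
def nodalCount (G : SimpleGraph V) (σ : V → V → ℝ) (u : V → ℝ) : ℕ :=
  Nat.card (G.deleteEdges (nodalEdges G σ u)).ConnectedComponent

/-- `(G,σ)` is balanced: every cycle has positive sign. -/
def IsBalanced (G : SimpleGraph V) (σ : V → V → ℝ) : Prop :=
  ∀ ⦃v : V⦄ (p : G.Walk v v), p.IsCycle →
    0 < (p.darts.map fun d => σ d.toProd.1 d.toProd.2).prod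

/-- The matrix `B_{ij}(a)`. -/
def Bmat [DecidableEq V] (i j : V) (a : ℝ) : Matrix V V ℝ :=
  Matrix.of fun x y =>
    if x = i ∧ y = i then a
    else if x = j ∧ y = j then a⁻¹
    else if (x = i ∧ y = j) ∨ (x = j ∧ y = i) then -1
    else 0

/-- The signature `σ^{∂P}` determined by the partition `P`. -/
def partSgn {ν : ℕ} (P : V → Fin ν) (i j : V) : ℝ :=
  if P i = P j then 1 else -1

/-- `L^{∂P}(P,α)`: the partition Laplacian perturbed by the rank-one parameter matrices
on the oriented boundary edges `O`. -/
def paramMatrix [Fintype V] [DecidableEq V] (G : SimpleGraph V) [DecidableRel G.Adj]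
    (w : V → V → ℝ) {ν : ℕ} (P : V → Fin ν) (O : Finset (V × V)) (α : V × V → ℝ) :
    Matrix V V ℝ :=
  signedLaplacian G w (partSgn P) + ∑ p ∈ O, w p.1 p.2 • Bmat p.1 p.2 (α p)

/-- The principal submatrix of `M` on the `k`-th part of the partition `P`. -/
def blockMatrix {ν : ℕ} (M : Matrix V V ℝ) (P : V → Fin ν) (k : Fin ν) :
    Matrix {v : V // P v = k} {v : V // P v = k} ℝ :=
  M.submatrix Subtype.val Subtype.val

/-- `λ₁(G_k, α)`: the smallest eigenvalue of the block of `L^{∂P}(P,α)` on part `k`. -/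
def lam1Block [Fintype V] [DecidableEq V] {ν : ℕ} (M : Matrix V V ℝ) (P : V → Fin ν)
    (k : Fin ν) : ℝ :=
  nthEigenvalue (blockMatrix M P k) 1

/-- The partition energy `Λ(P, α) = max_k λ₁(G_k, α)`. -/
def PartitionEnergy [Fintype V] [DecidableEq V] (G : SimpleGraph V) [DecidableRel G.Adj]
    (w : V → V → ℝ) {ν : ℕ} (P : V → Fin ν) (O : Finset (V × V)) (α : V × V → ℝ) : ℝ :=
  ⨆ k : Fin ν, lam1Block (paramMatrix G w P O α) P k

/-- `(P, α)` is an equipartition: all the first block eigenvalues agree. -/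
def IsEquipartition [Fintype V] [DecidableEq V] (G : SimpleGraph V) [DecidableRel G.Adj]
    (w : V → V → ℝ) {ν : ℕ} (P : V → Fin ν) (O : Finset (V × V)) (α : V × V → ℝ) : Prop :=
  ∀ k l : Fin ν, lam1Block (paramMatrix G w P O α) P k = lam1Block (paramMatrix G w P O α) P l




section Spec
variable [Fintype V] [DecidableEq V] {A : Matrix V V ℝ}

lemma star_coe_eq (hA : A.IsHermitian) :
    star (hA.eigenvectorUnitary : Matrix V V ℝ) = (hA.eigenvectorUnitary : Matrix V V ℝ)ᵀ := by
  rw [Matrix.star_eq_conjTranspose]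
  ext i j
  simp [Matrix.conjTranspose_apply]

lemma mul_transpose_eq_one (hA : A.IsHermitian) :
    (hA.eigenvectorUnitary : Matrix V V ℝ) * (hA.eigenvectorUnitary : Matrix V V ℝ)ᵀ = 1 := by
  rw [← star_coe_eq hA]
  exact (Matrix.mem_unitaryGroup_iff).mp hA.eigenvectorUnitary.2

lemma dot_self_eq_sum (hA : A.IsHermitian) (x : V → ℝ) :
    x ⬝ᵥ x = ∑ v, ((star (hA.eigenvectorUnitary : Matrix V V ℝ)).mulVec x v)^2 := by
  have : ∑ v, ((star (hA.eigenvectorUnitary : Matrix V V ℝ)).mulVec x v)^2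
      = ((star (hA.eigenvectorUnitary : Matrix V V ℝ)).mulVec x) ⬝ᵥ
        ((star (hA.eigenvectorUnitary : Matrix V V ℝ)).mulVec x) := by
    simp [dotProduct, sq]
  rw [this, star_coe_eq hA, Matrix.mulVec_transpose, ← Matrix.dotProduct_mulVec,
    ← Matrix.mulVec_transpose, Matrix.mulVec_mulVec, mul_transpose_eq_one hA, Matrix.one_mulVec]

lemma dot_mulVec_eq_sum (hA : A.IsHermitian) (x : V → ℝ) :
    x ⬝ᵥ A.mulVec x = ∑ v, hA.eigenvalues v *
      ((star (hA.eigenvectorUnitary : Matrix V V ℝ)).mulVec x v)^2 := by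
  set U : Matrix V V ℝ := (hA.eigenvectorUnitary : Matrix V V ℝ) with hU
  have hspec : A = U * diagonal hA.eigenvalues * Uᵀ := by
    rw [← star_coe_eq hA]
    have h := hA.spectral_theorem
    convert h using 2
    simp [hU, RCLike.ofReal_real_eq_id]
  calc x ⬝ᵥ A.mulVec x = x ⬝ᵥ (U *ᵥ ((diagonal hA.eigenvalues) *ᵥ (Uᵀ *ᵥ x))) := by
        conv_lhs => rw [hspec]
        simp [Matrix.mulVec_mulVec, Matrix.mul_assoc]
    _ = (Uᵀ *ᵥ x) ⬝ᵥ ((diagonal hA.eigenvalues) *ᵥ (Uᵀ *ᵥ x)) := by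
        rw [Matrix.dotProduct_mulVec, ← Matrix.mulVec_transpose]
    _ = ∑ v, hA.eigenvalues v * ((Uᵀ *ᵥ x) v)^2 := by
        simp only [dotProduct, Matrix.mulVec_diagonal, sq]
        exact Finset.sum_congr rfl fun v _ => by ring
    _ = _ := by rw [star_coe_eq hA]


lemma nthEigenvalue_eq (hA : A.IsHermitian) {n : ℕ} (hn : n - 1 < Fintype.card V) :
    nthEigenvalue A n = (fun i => hA.eigenvalues ((Fintype.equivFin V).symm i))
      (Tuple.sort (fun i => hA.eigenvalues ((Fintype.equivFin V).symm i)) ⟨n - 1, hn⟩) := by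
  rw [nthEigenvalue, dif_pos ⟨hA, hn⟩]

/-- The smallest eigenvalue: `nthEigenvalue A 1` is an eigenvalue and a lower bound. -/
lemma nthEigenvalue_one (hA : A.IsHermitian) (h0 : 0 < Fintype.card V) :
    ∃ i, nthEigenvalue A 1 = hA.eigenvalues i ∧ ∀ j, nthEigenvalue A 1 ≤ hA.eigenvalues j := by
  set f : Fin (Fintype.card V) → ℝ := fun i => hA.eigenvalues ((Fintype.equivFin V).symm i)
    with hf
  have h0' : (1:ℕ) - 1 < Fintype.card V := by simpa using h0
  have hval : nthEigenvalue A 1 = f (Tuple.sort f ⟨0, h0⟩) := by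
    simpa using nthEigenvalue_eq hA h0'
  refine ⟨(Fintype.equivFin V).symm (Tuple.sort f ⟨0, h0⟩), hval, fun j => ?_⟩
  have hj : hA.eigenvalues j = f (Tuple.sort f ((Tuple.sort f).symm ((Fintype.equivFin V) j)))
    := by simp [hf]
  rw [hval, hj]
  exact Tuple.monotone_sort f (Fin.le_def.mpr (Nat.zero_le _))

lemma nthEigenvalue_le_of_count (hA : A.IsHermitian) {ν : ℕ} (hν : 1 ≤ ν)
    (hνc : ν ≤ Fintype.card V) (Λ : ℝ)
    (hcount : Λ < nthEigenvalue A ν) :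
    (univ.filter (fun v => hA.eigenvalues v ≤ Λ)).card ≤ ν - 1 := by
  set f : Fin (Fintype.card V) → ℝ := fun i => hA.eigenvalues ((Fintype.equivFin V).symm i)
    with hf
  have hn : ν - 1 < Fintype.card V := lt_of_lt_of_le (Nat.sub_lt hν one_pos) hνc
  have hval : nthEigenvalue A ν = f (Tuple.sort f ⟨ν - 1, hn⟩) := nthEigenvalue_eq hA hn
  have := Finset.card_le_card_of_injOn
    (s := univ.filter (fun v => hA.eigenvalues v ≤ Λ)) (t := Finset.range (ν - 1))
    (fun v => ((Tuple.sort f).symm ((Fintype.equivFin V) v) : Fin (Fintype.card V)).val) ?_ ?_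
  · simpa using this
  · intro v hv
    simp only [Finset.coe_filter, Finset.mem_filter, Finset.mem_univ, true_and, Set.mem_setOf_eq] at hv
    simp only [Finset.coe_range, Set.mem_Iio, Finset.mem_range]
    by_contra hge
    push_neg at hge
    have hle : (⟨ν - 1, hn⟩ : Fin (Fintype.card V)) ≤ (Tuple.sort f).symm ((Fintype.equivFin V) v) := by
      exact hge
    have h2 := Tuple.monotone_sort f hle
    simp only [Function.comp_apply, Equiv.apply_symm_apply] at h2
    rw [← hval] at h2
    have h3 : nthEigenvalue A ν ≤ hA.eigenvalues v := by
      simpa [hf] using h2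
    linarith
  · intro a _ b _ hab
    have := Fin.val_injective hab
    simpa using (Fintype.equivFin V).injective ((Tuple.sort f).symm.injective this)


lemma cf_lemma (hA : A.IsHermitian) {ν : ℕ} (hν : 1 ≤ ν) (hνc : ν ≤ Fintype.card V)
    (Λ : ℝ) (φ : Fin ν → V → ℝ)
    (hli : ∀ c : Fin ν → ℝ, (∑ k, c k • φ k) = 0 → c = 0)
    (hq : ∀ c : Fin ν → ℝ, (∑ k, c k • φ k) ⬝ᵥ A.mulVec (∑ k, c k • φ k) ≤
      Λ * ((∑ k, c k • φ k) ⬝ᵥ (∑ k, c k • φ k))) :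
    nthEigenvalue A ν ≤ Λ := by
  by_contra hcon
  push_neg at hcon
  set U : Matrix V V ℝ := (hA.eigenvectorUnitary : Matrix V V ℝ) with hUdef
  set S : Finset V := univ.filter (fun v => hA.eigenvalues v ≤ Λ) with hS
  have hcard : S.card ≤ ν - 1 := nthEigenvalue_le_of_count hA hν hνc Λ hcon
  -- the linear map c ↦ ((star U) *ᵥ (∑ k, c k • φ k)) restricted to S
  let g : V → Fin ν → ℝ := fun v k => ((star U).mulVec (φ k)) v
  let T : (Fin ν → ℝ) →ₗ[ℝ] ({v // v ∈ S} → ℝ) :=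
    { toFun := fun c => fun s => ∑ k, c k * g s.val k
      map_add' := by
        intro a b; funext s; simp [add_mul, Finset.sum_add_distrib]
      map_smul' := by
        intro m a; funext s; simp [Finset.mul_sum, mul_assoc] }
  have hmv : ∀ c : Fin ν → ℝ, ∀ v, ((star U).mulVec (∑ k, c k • φ k)) v = ∑ k, c k * g v k := by
    intro c v
    have : (star U).mulVec (∑ k, c k • φ k) = ∑ k, c k • (star U).mulVec (φ k) := by
      rw [← Matrix.mulVecLin_apply, map_sum]
      simp [Matrix.mulVecLin_apply, Matrix.mulVec_smul]
    rw [this]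
    simp [g]
  have hTnotinj : ¬ Function.Injective T := by
    intro hinj
    have h1 : (Module.finrank ℝ (Fin ν → ℝ)) ≤ Module.finrank ℝ ({v // v ∈ S} → ℝ) :=
      LinearMap.finrank_le_finrank_of_injective hinj
    rw [Module.finrank_pi ℝ, Module.finrank_pi ℝ] at h1
    simp only [Fintype.card_fin, Fintype.card_coe] at h1
    omega
  rw [Function.not_injective_iff] at hTnotinj
  obtain ⟨a, b, hab, hne⟩ := hTnotinj
  set c : Fin ν → ℝ := a - b with hc
  have hc0 : c ≠ 0 := sub_ne_zero_of_ne hne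
  have hTc : T c = 0 := by rw [map_sub, hab, sub_self]
  set x : V → ℝ := ∑ k, c k • φ k with hx
  have hx0 : x ≠ 0 := fun h => hc0 (hli c h)
  set y : V → ℝ := (star U).mulVec x with hy
  have hyS : ∀ v ∈ S, y v = 0 := by
    intro v hv
    have := congrFun hTc ⟨v, hv⟩
    exact (hmv c v).trans this
  have hxx : 0 < x ⬝ᵥ x := by
    have hne : x ⬝ᵥ x ≠ 0 := fun h => hx0 (dotProduct_self_eq_zero.mp h)
    have hnn : 0 ≤ x ⬝ᵥ x := Finset.sum_nonneg fun i _ => mul_self_nonneg _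
    exact lt_of_le_of_ne hnn (Ne.symm hne)
  have key : Λ * (x ⬝ᵥ x) < x ⬝ᵥ A.mulVec x := by
    rw [dot_mulVec_eq_sum hA x, dot_self_eq_sum hA x, Finset.mul_sum]
    have hstrict : 0 < ∑ v, (hA.eigenvalues v * (y v)^2 - Λ * (y v)^2) := by
      apply Finset.sum_pos'
      · intro v _
        by_cases hv : v ∈ S
        · rw [hyS v hv]; simp
        · have : Λ < hA.eigenvalues v := by
            simp only [hS, Finset.mem_filter, Finset.mem_univ, true_and, not_le] at hv
            exact hv
          nlinarith [sq_nonneg (y v)]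
      · have hys : ∃ v, y v ≠ 0 := by
          by_contra hall
          push_neg at hall
          have : x ⬝ᵥ x = 0 := by
            rw [dot_self_eq_sum hA x]
            exact Finset.sum_eq_zero fun v _ => by rw [← hy] at *; rw [hall v]; ring
          linarith
        obtain ⟨v, hv⟩ := hys
        refine ⟨v, Finset.mem_univ v, ?_⟩
        have hvS : v ∉ S := fun h => hv (hyS v h)
        have : Λ < hA.eigenvalues v := by
          simp only [hS, Finset.mem_filter, Finset.mem_univ, true_and, not_le] at hvS
          exact hvS
        have : 0 < (y v)^2 := by positivity
        nlinarith
    have := Finset.sum_sub_distrib (f := fun v => hA.eigenvalues v * (y v)^2)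
      (g := fun v => Λ * (y v)^2) (s := univ)
    rw [this] at hstrict
    rw [hy] at *
    linarith
  have := hq c
  rw [← hx] at this
  linarith
lemma nthEigenvalue_one_le_rayleigh (hA : A.IsHermitian) (h0 : 0 < Fintype.card V)
    (x : V → ℝ) : nthEigenvalue A 1 * (x ⬝ᵥ x) ≤ x ⬝ᵥ A.mulVec x := by
  obtain ⟨i, _, hall⟩ := nthEigenvalue_one hA h0
  rw [dot_mulVec_eq_sum hA x, dot_self_eq_sum hA x, Finset.mul_sum]
  apply Finset.sum_le_sum
  intro v _
  exact mul_le_mul_of_nonneg_right (hall v) (sq_nonneg _)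

lemma exists_min_eigenvector (hA : A.IsHermitian) (h0 : 0 < Fintype.card V) :
    ∃ u : V → ℝ, u ⬝ᵥ u = 1 ∧ A.mulVec u = nthEigenvalue A 1 • u := by
  obtain ⟨i, hi, -⟩ := nthEigenvalue_one hA h0
  refine ⟨⇑(hA.eigenvectorBasis i), ?_, ?_⟩
  · have h1 : ‖hA.eigenvectorBasis i‖ = 1 := hA.eigenvectorBasis.orthonormal.1 i
    have h2 : (inner ℝ (hA.eigenvectorBasis i) (hA.eigenvectorBasis i) : ℝ) = 1 := by
      rw [real_inner_self_eq_norm_mul_norm, h1]; ring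
    rw [← h2, PiLp.inner_apply]
    simp [dotProduct, RCLike.inner_apply, sq]
  · rw [hi]; exact hA.mulVec_eigenvectorBasis i
end Spec

section Ground
variable {W : Type*} [Fintype W]

lemma ground_state_bound (A : Matrix W W ℝ) (hsym : ∀ i j, A i j = A j i)
    (ψ : W → ℝ) (hψ : ∀ i, ψ i ≠ 0) (lam : ℝ) (heig : A.mulVec ψ = lam • ψ)
    (hoff : ∀ i j, i ≠ j → A i j * (ψ i * ψ j) ≤ 0) (x : W → ℝ) :
    lam * (x ⬝ᵥ x) ≤ x ⬝ᵥ A.mulVec x := by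
  classical
  set y : W → ℝ := fun i => x i / ψ i with hy
  have hxy : ∀ i, x i = ψ i * y i := by
    intro i
    rw [hy]
    simp only
    rw [mul_comm, div_mul_cancel₀ _ (hψ i)]
  have hAψ : ∀ i, ∑ j, A i j * ψ j = lam * ψ i := by
    intro i
    have := congrFun heig i
    simpa [Matrix.mulVec, dotProduct] using this
  have e1 : x ⬝ᵥ A.mulVec x = ∑ i, ∑ j, A i j * ψ i * ψ j * (y i * y j) := by
    simp only [dotProduct, Matrix.mulVec]
    refine Finset.sum_congr rfl fun i _ => ?_
    rw [Finset.mul_sum]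
    refine Finset.sum_congr rfl fun j _ => ?_
    rw [hxy i, hxy j]; ring
  have e2 : lam * (x ⬝ᵥ x) = ∑ i, ∑ j, A i j * ψ i * ψ j * (y i * y i) := by
    simp only [dotProduct]
    rw [Finset.mul_sum]
    refine Finset.sum_congr rfl fun i _ => ?_
    have h5 : lam * (x i * x i) = (lam * ψ i) * (ψ i * (y i * y i)) := by
      rw [hxy i]; ring
    rw [h5, ← hAψ i, Finset.sum_mul]
    refine Finset.sum_congr rfl fun j _ => ?_
    ring
  set g : W → W → ℝ := fun i j => A i j * ψ i * ψ j * (y i * y j - y i * y i) with hg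
  have e3 : x ⬝ᵥ A.mulVec x - lam * (x ⬝ᵥ x) = ∑ i, ∑ j, g i j := by
    rw [e1, e2, ← Finset.sum_sub_distrib]
    refine Finset.sum_congr rfl fun i _ => ?_
    rw [← Finset.sum_sub_distrib]
    refine Finset.sum_congr rfl fun j _ => ?_
    rw [hg]; ring
  have hcomm : (∑ i, ∑ j, g j i) = ∑ i, ∑ j, g i j := Finset.sum_comm
  have hsplit : ∑ i, ∑ j, (g i j + g j i) = (∑ i, ∑ j, g i j) + (∑ i, ∑ j, g j i) := by
    rw [← Finset.sum_add_distrib]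
    exact Finset.sum_congr rfl fun i _ => Finset.sum_add_distrib
  have hterm : ∀ i j, g i j + g j i = -(A i j * (ψ i * ψ j)) * (y i - y j)^2 := by
    intro i j
    rw [hg]
    simp only
    rw [hsym j i]
    ring
  have hnn : 0 ≤ ∑ i, ∑ j, (g i j + g j i) := by
    apply Finset.sum_nonneg
    intro i _
    apply Finset.sum_nonneg
    intro j _
    rw [hterm i j]
    by_cases hij : i = j
    · subst hij; simp
    · exact mul_nonneg (neg_nonneg.mpr (hoff i j hij)) (sq_nonneg _)
  rw [hsplit, hcomm] at hnn
  linarith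

end Ground
set_option linter.unusedSectionVars false
set_option linter.unusedVariables false
set_option linter.unreachableTactic false
set_option linter.unusedTactic false

section Comb
variable [Fintype V] [DecidableEq V]

/-- The positive-semidefinite rank-one parameter matrix `D_{ij}(a)`. -/
def Dmat (i j : V) (a : ℝ) : Matrix V V ℝ :=
  Matrix.of fun x y =>
    if x = i ∧ y = i then a
    else if x = j ∧ y = j then a⁻¹
    else if (x = i ∧ y = j) ∨ (x = j ∧ y = i) then 1
    else 0

lemma Dmat_symm (i j : V) (a : ℝ) (x y : V) : Dmat i j a x y = Dmat i j a y x := by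
  simp only [Dmat, Matrix.of_apply]
  split_ifs <;> first | rfl | tauto

lemma Bmat_symm (i j : V) (a : ℝ) (x y : V) : Bmat i j a x y = Bmat i j a y x := by
  simp only [Bmat, Matrix.of_apply]
  split_ifs <;> first | rfl | tauto

lemma Bmat_eq_Dmat_diag {i j : V} (hij : i ≠ j) (a : ℝ) (x : V) :
    Bmat i j a x x = Dmat i j a x x := by
  simp only [Bmat, Dmat, Matrix.of_apply]
  split_ifs <;> first | rfl | tauto

lemma Bmat_eq_Dmat_of_unmatched {i j : V} (a : ℝ) {x y : V}
    (h : ¬((x = i ∧ y = j) ∨ (x = j ∧ y = i))) :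
    Bmat i j a x y = Dmat i j a x y := by
  simp only [Bmat, Dmat, Matrix.of_apply]
  split_ifs <;> first | rfl | tauto

lemma Dmat_matched {i j : V} (hij : i ≠ j) (a : ℝ) : Dmat i j a i j = 1 := by
  simp [Dmat, hij, hij.symm]

lemma Dmat_matched' {i j : V} (hij : i ≠ j) (a : ℝ) : Dmat j i a i j = 1 := by
  simp [Dmat, hij, hij.symm]

lemma Bmat_matched {i j : V} (hij : i ≠ j) (a : ℝ) : Bmat i j a i j = -1 := by
  simp [Bmat, hij, hij.symm]

lemma Bmat_matched' {i j : V} (hij : i ≠ j) (a : ℝ) : Bmat j i a i j = -1 := by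
  simp [Bmat, hij, hij.symm]

lemma Dmat_unmatched {p : V × V} (hp : p.1 ≠ p.2) {x y : V} (hxy : x ≠ y)
    (h1 : p ≠ (x, y)) (h2 : p ≠ (y, x)) (a : ℝ) : Dmat p.1 p.2 a x y = 0 := by
  simp only [Dmat, Matrix.of_apply]
  split_ifs with ha hb hc
  · exact absurd (ha.1.trans ha.2.symm) hxy
  · exact absurd (hb.1.trans hb.2.symm) hxy
  · rcases hc with ⟨h3, h4⟩ | ⟨h3, h4⟩
    · exact absurd (Prod.ext h3.symm h4.symm) h1
    · exact absurd (Prod.ext h4.symm h3.symm) h2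
  · rfl

/-- evaluation of an `O`-indexed sum of matrices at an off-diagonal entry. -/
lemma sum_entry_eval {x y : V} (hxy : x ≠ y) (O : Finset (V × V)) (f : V × V → Matrix V V ℝ)
    (hzero : ∀ p ∈ O, p ≠ (x, y) → p ≠ (y, x) → f p x y = 0) :
    (∑ p ∈ O, f p) x y =
      (if (x, y) ∈ O then f (x, y) x y else 0) + (if (y, x) ∈ O then f (y, x) x y else 0) := by
  classical
  rw [Matrix.sum_apply]
  have hsub : ∑ p ∈ O, f p x y = ∑ p ∈ O.filter (fun p => p = (x, y) ∨ p = (y, x)), f p x y := by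
    rw [Finset.sum_filter_of_ne]
    intro p hp hne
    by_contra hcon
    exact hne (absurd (hzero p hp) (by tauto))
  rw [hsub, Finset.filter_or, Finset.sum_union, Finset.filter_eq', Finset.filter_eq']
  · split_ifs <;> simp
  · rw [Finset.filter_eq', Finset.filter_eq']
    split_ifs <;>
      simp_all [Finset.disjoint_singleton, Prod.ext_iff, hxy, Ne.symm hxy]

end Comb

section Comb2
set_option linter.unusedSectionVars false
variable [Fintype V] [DecidableEq V] (G : SimpleGraph V) [DecidableRel G.Adj] (w : V → V → ℝ)

lemma signedLaplacian_symm (σ : V → V → ℝ) (hw : ∀ i j, w i j = w j i)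
    (hσ : ∀ i j, σ i j = σ j i) (i j : V) :
    signedLaplacian G w σ i j = signedLaplacian G w σ j i := by
  simp only [signedLaplacian, Matrix.of_apply]
  by_cases hij : i = j
  · subst hij; rfl
  · rw [if_neg hij, if_neg (Ne.symm hij)]
    by_cases hadj : G.Adj i j
    · rw [if_pos hadj, if_pos hadj.symm, hσ, hw]
    · rw [if_neg hadj, if_neg (fun h => hadj h.symm)]

lemma paramMatrix_eq {ν : ℕ} (P : V → Fin ν) (O : Finset (V × V)) (α : V × V → ℝ)
    (hw : ∀ i j, w i j = w j i)
    (hO1 : ∀ p ∈ O, G.Adj p.1 p.2 ∧ P p.1 ≠ P p.2)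
    (hO2 : ∀ i j, G.Adj i j → P i ≠ P j → ((i, j) ∈ O ↔ (j, i) ∉ O)) :
    paramMatrix G w P O α = signedLaplacian G w (fun _ _ => 1)
      + ∑ p ∈ O, w p.1 p.2 • Dmat p.1 p.2 (α p) := by
  ext i j
  rw [paramMatrix]
  simp only [Matrix.add_apply]
  by_cases hij : i = j
  · subst hij
    have hdiag : signedLaplacian G w (partSgn P) i i = signedLaplacian G w (fun _ _ => 1) i i := by
      simp [signedLaplacian]
    rw [hdiag]
    congr 1
    rw [Matrix.sum_apply, Matrix.sum_apply]
    refine Finset.sum_congr rfl fun p hp => ?_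
    have hne := (hO1 p hp).1.ne
    simp only [Matrix.smul_apply, smul_eq_mul]
    rw [Bmat_eq_Dmat_diag hne]
  · have hBsum := sum_entry_eval hij O (fun p => w p.1 p.2 • Bmat p.1 p.2 (α p)) ?hB
    have hDsum := sum_entry_eval hij O (fun p => w p.1 p.2 • Dmat p.1 p.2 (α p)) ?hD
    case hB =>
      intro p hp h1 h2
      have hne := (hO1 p hp).1.ne
      simp only [Matrix.smul_apply, smul_eq_mul]
      have hunm : ¬((i = p.1 ∧ j = p.2) ∨ (i = p.2 ∧ j = p.1)) := by
        rintro (⟨h3, h4⟩ | ⟨h3, h4⟩)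
        · exact h1 (Prod.ext h3.symm h4.symm)
        · exact h2 (Prod.ext h4.symm h3.symm)
      rw [Bmat_eq_Dmat_of_unmatched (α p) hunm, Dmat_unmatched hne hij h1 h2, mul_zero]
    case hD =>
      intro p hp h1 h2
      have hne := (hO1 p hp).1.ne
      simp only [Matrix.smul_apply, smul_eq_mul]
      rw [Dmat_unmatched hne hij h1 h2, mul_zero]
    rw [hBsum, hDsum]
    simp only [Matrix.smul_apply, smul_eq_mul]
    by_cases hP : P i = P j
    · have h1 : (i, j) ∉ O := fun h => (hO1 _ h).2 hP
      have h2 : (j, i) ∉ O := fun h => (hO1 _ h).2 hP.symm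
      rw [if_neg h1, if_neg h2, if_neg h1, if_neg h2]
      simp only [signedLaplacian, Matrix.of_apply, if_neg hij]
      by_cases hadj : G.Adj i j
      · rw [if_pos hadj, if_pos hadj, partSgn, if_pos hP]
      · rw [if_neg hadj, if_neg hadj]
    · by_cases hadj : G.Adj i j
      · have hsgn : partSgn P i j = -1 := by rw [partSgn, if_neg hP]
        have hLσ : signedLaplacian G w (partSgn P) i j = w i j := by
          simp only [signedLaplacian, Matrix.of_apply, if_neg hij, if_pos hadj, hsgn]; ring
        have hL1 : signedLaplacian G w (fun _ _ => 1) i j = -(w i j) := by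
          simp only [signedLaplacian, Matrix.of_apply, if_neg hij, if_pos hadj]; ring
        rw [hLσ, hL1]
        have hiff := hO2 i j hadj hP
        by_cases hin : (i, j) ∈ O
        · have hout : (j, i) ∉ O := hiff.mp hin
          rw [if_pos hin, if_neg hout, if_pos hin, if_neg hout,
            Bmat_matched hij, Dmat_matched hij]
          ring
        · have hin2 : (j, i) ∈ O := by
            by_contra hcon
            exact hin (hiff.mpr hcon)
          rw [if_neg hin, if_pos hin2, if_neg hin, if_pos hin2,
            Bmat_matched' hij, Dmat_matched' hij, hw j i]
          ring
      · have h1 : (i, j) ∉ O := fun h => hadj (hO1 _ h).1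
        have h2 : (j, i) ∉ O := fun h => hadj ((hO1 _ h).1.symm)
        rw [if_neg h1, if_neg h2, if_neg h1, if_neg h2]
        simp only [signedLaplacian, Matrix.of_apply, if_neg hij, if_neg hadj]

end Comb2

section Comb3
set_option linter.unusedSectionVars false
variable [Fintype V] [DecidableEq V]

lemma Dmat_mulVec_apply {i j : V} (hij : i ≠ j) (a : ℝ) (x : V → ℝ) (u : V) :
    (Dmat i j a).mulVec x u =
      (if u = i then a * x i + x j else 0) + (if u = j then a⁻¹ * x j + x i else 0) := by
  have hrow : ∀ v, Dmat i j a u v * x v =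
      (if v = i then (if u = i then a else if u = j then 1 else 0) * x v else 0)
      + (if v = j then (if u = i then 1 else if u = j then a⁻¹ else 0) * x v else 0) := by
    intro v
    simp only [Dmat, Matrix.of_apply]
    split_ifs <;> simp_all <;> ring
  simp only [Matrix.mulVec, dotProduct]
  rw [Finset.sum_congr rfl (fun v _ => hrow v), Finset.sum_add_distrib,
    Finset.sum_ite_eq' univ i, Finset.sum_ite_eq' univ j]
  simp only [Finset.mem_univ, if_true]
  split_ifs <;> simp_all <;> ring

lemma Dmat_mulVec_zero {i j : V} (hij : i ≠ j) {ψ : V → ℝ} (hψi : ψ i ≠ 0) (hψj : ψ j ≠ 0)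
    {a : ℝ} (ha : a = -ψ j / ψ i) : (Dmat i j a).mulVec ψ = 0 := by
  funext u
  rw [Dmat_mulVec_apply hij a ψ u]
  have h1 : a * ψ i + ψ j = 0 := by rw [ha]; field_simp; ring
  have h2 : a⁻¹ * ψ j + ψ i = 0 := by
    rw [ha, inv_div]
    rw [show ψ i / -ψ j = -(ψ i / ψ j) by rw [div_neg], neg_mul, div_mul_cancel₀ _ hψj]
    ring
  rw [h1, h2]
  simp

lemma dot_Dmat_nonneg {i j : V} (hij : i ≠ j) {a : ℝ} (ha : 0 < a) (x : V → ℝ) :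
    0 ≤ x ⬝ᵥ (Dmat i j a).mulVec x := by
  have hval : x ⬝ᵥ (Dmat i j a).mulVec x
      = x i * (a * x i + x j) + x j * (a⁻¹ * x j + x i) := by
    simp only [dotProduct]
    rw [Finset.sum_congr rfl (fun u _ => by
      rw [Dmat_mulVec_apply hij a x u, mul_add, mul_ite, mul_zero, mul_ite, mul_zero])]
    rw [Finset.sum_add_distrib, Finset.sum_ite_eq' univ i, Finset.sum_ite_eq' univ j]
    simp
  rw [hval]
  have hinv : a * a⁻¹ = 1 := mul_inv_cancel₀ (ne_of_gt ha)
  nlinarith [sq_nonneg (a * x i + x j), ha, hinv, sq_nonneg (x i), sq_nonneg (x j)]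

end Comb3

section Comb4
set_option linter.unusedSectionVars false
variable [Fintype V] [DecidableEq V]

lemma isHermitian_of_symm {M : Matrix V V ℝ} (h : ∀ i j, M i j = M j i) : M.IsHermitian := by
  ext i j
  simp only [Matrix.conjTranspose_apply, RCLike.star_def, starRingEnd_apply, star_trivial]
  exact h j i

lemma herm_symm_entries {M : Matrix V V ℝ} (hM : M.IsHermitian) (i j : V) :
    M i j = M j i := by
  have h2 := congrFun (congrFun hM.symm i) j
  simpa [Matrix.conjTranspose_apply] using h2

lemma blockMatrix_isHermitian {ν : ℕ} {M : Matrix V V ℝ} (hM : M.IsHermitian)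
    (P : V → Fin ν) (k : Fin ν) : (blockMatrix M P k).IsHermitian := by
  apply isHermitian_of_symm (V := {v : V // P v = k})
  intro i j
  exact herm_symm_entries hM i.val j.val

lemma blockMatrix_mulVec_restrict {ν : ℕ} {M : Matrix V V ℝ} {P : V → Fin ν}
    (hblock : ∀ i j, P i ≠ P j → M i j = 0) (k : Fin ν) {ψ : V → ℝ} {lam : ℝ}
    (heig : M.mulVec ψ = lam • ψ) :
    (blockMatrix M P k).mulVec (fun s => ψ s.val) = lam • (fun s => ψ s.val) := by
  funext s
  have hfull := congrFun heig s.val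
  simp only [Matrix.mulVec, dotProduct, Pi.smul_apply, smul_eq_mul] at hfull ⊢
  simp only [blockMatrix, Matrix.submatrix_apply]
  calc ∑ x : {v : V // P v = k}, M s.val x.val * ψ x.val
      = ∑ j ∈ Finset.univ.filter (fun v => P v = k), M s.val j * ψ j :=
        (Finset.sum_subtype (p := fun v => P v = k)
          (Finset.univ.filter (fun v => P v = k)) (fun x => by simp)
          (fun j => M s.val j * ψ j)).symm
    _ = ∑ j : V, M s.val j * ψ j := by
        rw [Finset.sum_filter]
        refine Finset.sum_congr rfl fun j _ => ?_
        by_cases hj : P j = k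
        · rw [if_pos hj]
        · rw [if_neg hj, hblock s.val j (by rw [s.prop]; exact fun h => hj h.symm), zero_mul]
    _ = lam * ψ s.val := hfull

lemma blockMatrix_mulVec_extend {ν : ℕ} {M : Matrix V V ℝ} {P : V → Fin ν}
    (hblock : ∀ i j, P i ≠ P j → M i j = 0) (k : Fin ν) (φ : {v : V // P v = k} → ℝ) (μ : ℝ)
    (hφ : (blockMatrix M P k).mulVec φ = μ • φ) :
    M.mulVec (fun v => if h : P v = k then φ ⟨v, h⟩ else 0)
      = μ • (fun v => if h : P v = k then φ ⟨v, h⟩ else 0) := by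
  set Φ : V → ℝ := fun v => if h : P v = k then φ ⟨v, h⟩ else 0 with hΦ
  funext i
  have hsum : M.mulVec Φ i = ∑ j ∈ Finset.univ.filter (fun v => P v = k), M i j * Φ j := by
    simp only [Matrix.mulVec, dotProduct]
    rw [Finset.sum_filter]
    refine Finset.sum_congr rfl fun j _ => ?_
    by_cases hj : P j = k
    · rw [if_pos hj]
    · rw [hΦ]
      simp only
      rw [dif_neg hj, mul_zero, if_neg hj]
  by_cases hik : P i = k
  · have hblockeq := congrFun hφ ⟨i, hik⟩
    simp only [Matrix.mulVec, dotProduct, Pi.smul_apply, smul_eq_mul, blockMatrix,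
      Matrix.submatrix_apply] at hblockeq
    rw [hsum]
    have hconv : ∑ j ∈ Finset.univ.filter (fun v => P v = k), M i j * Φ j
        = ∑ s : {v : V // P v = k}, M i s.val * φ s := by
      rw [Finset.sum_subtype (p := fun v => P v = k) _ (fun x => by simp) (fun j => M i j * Φ j)]
      refine Finset.sum_congr rfl fun s _ => ?_
      congr 1
      rw [hΦ]
      simp only
      rw [dif_pos s.prop]
    rw [hconv, hblockeq]
    simp only [Pi.smul_apply, smul_eq_mul, hΦ]
    rw [dif_pos hik]
  · rw [hsum]
    have hz : ∀ j ∈ Finset.univ.filter (fun v => P v = k), M i j * Φ j = 0 := by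
      intro j hj
      simp only [Finset.mem_filter] at hj
      rw [hblock i j (by rw [hj.2]; exact hik), zero_mul]
    rw [Finset.sum_eq_zero hz]
    simp only [Pi.smul_apply, smul_eq_mul, hΦ]
    rw [dif_neg hik, mul_zero]

end Comb4

section Comb5
set_option linter.unusedSectionVars false
variable [Fintype V] [DecidableEq V]

lemma sum_mulVec' {ι : Type*} (s : Finset ι) (f : ι → Matrix V V ℝ) (x : V → ℝ) :
    (∑ p ∈ s, f p).mulVec x = ∑ p ∈ s, (f p).mulVec x := by
  funext i
  simp only [Matrix.mulVec, dotProduct, Matrix.sum_apply, Finset.sum_apply, Finset.sum_mul]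
  exact Finset.sum_comm

lemma mulVec_sum' {ι : Type*} (M : Matrix V V ℝ) (s : Finset ι) (f : ι → V → ℝ) :
    M.mulVec (∑ p ∈ s, f p) = ∑ p ∈ s, M.mulVec (f p) := by
  funext i
  simp only [Matrix.mulVec, dotProduct, Finset.sum_apply, Finset.mul_sum]
  exact Finset.sum_comm

lemma dotProduct_sum' {ι : Type*} (x : V → ℝ) (s : Finset ι) (g : ι → V → ℝ) :
    x ⬝ᵥ (∑ p ∈ s, g p) = ∑ p ∈ s, x ⬝ᵥ g p := by
  simp only [dotProduct, Finset.sum_apply, Finset.mul_sum]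
  exact Finset.sum_comm

lemma paramMatrix_isHermitian (G : SimpleGraph V) [DecidableRel G.Adj] (w : V → V → ℝ)
    {ν : ℕ} (P : V → Fin ν) (O : Finset (V × V)) (α : V × V → ℝ)
    (hw : ∀ i j, w i j = w j i)
    (hO1 : ∀ p ∈ O, G.Adj p.1 p.2 ∧ P p.1 ≠ P p.2)
    (hO2 : ∀ i j, G.Adj i j → P i ≠ P j → ((i, j) ∈ O ↔ (j, i) ∉ O)) :
    (paramMatrix G w P O α).IsHermitian := by
  rw [paramMatrix_eq G w P O α hw hO1 hO2]
  apply isHermitian_of_symm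
  intro i j
  simp only [Matrix.add_apply, Matrix.sum_apply, Matrix.smul_apply, smul_eq_mul]
  rw [signedLaplacian_symm G w _ hw (fun _ _ => (rfl : (1:ℝ) = 1)) i j]
  congr 1
  exact Finset.sum_congr rfl fun p _ => by rw [Dmat_symm]

lemma paramMatrix_offblock (G : SimpleGraph V) [DecidableRel G.Adj] (w : V → V → ℝ)
    {ν : ℕ} (P : V → Fin ν) (O : Finset (V × V)) (α : V × V → ℝ)
    (hw : ∀ i j, w i j = w j i)
    (hO1 : ∀ p ∈ O, G.Adj p.1 p.2 ∧ P p.1 ≠ P p.2)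
    (hO2 : ∀ i j, G.Adj i j → P i ≠ P j → ((i, j) ∈ O ↔ (j, i) ∉ O))
    {i j : V} (hPij : P i ≠ P j) : paramMatrix G w P O α i j = 0 := by
  have hij : i ≠ j := fun h => hPij (by rw [h])
  rw [paramMatrix_eq G w P O α hw hO1 hO2]
  simp only [Matrix.add_apply]
  rw [sum_entry_eval hij O _ (fun p hp h1 h2 => by
    have hne := (hO1 p hp).1.ne
    simp only [Matrix.smul_apply, smul_eq_mul]
    rw [Dmat_unmatched hne hij h1 h2, mul_zero])]
  by_cases hadj : G.Adj i j
  · have hiff := hO2 i j hadj hPij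
    by_cases hin : (i, j) ∈ O
    · rw [if_pos hin, if_neg (hiff.mp hin)]
      simp only [Matrix.smul_apply, smul_eq_mul]
      rw [Dmat_matched hij]
      simp only [signedLaplacian, Matrix.of_apply, if_neg hij, if_pos hadj]
      ring
    · have hin2 : (j, i) ∈ O := by
        by_contra hcon
        exact hin (hiff.mpr hcon)
      rw [if_neg hin, if_pos hin2]
      simp only [Matrix.smul_apply, smul_eq_mul]
      rw [Dmat_matched' hij, hw j i]
      simp only [signedLaplacian, Matrix.of_apply, if_neg hij, if_pos hadj]
      ring
  · have h1 : (i, j) ∉ O := fun h => hadj (hO1 _ h).1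
    have h2 : (j, i) ∉ O := fun h => hadj ((hO1 _ h).1.symm)
    rw [if_neg h1, if_neg h2]
    simp only [signedLaplacian, Matrix.of_apply, if_neg hij, if_neg hadj]
    ring

lemma paramMatrix_inblock (G : SimpleGraph V) [DecidableRel G.Adj] (w : V → V → ℝ)
    {ν : ℕ} (P : V → Fin ν) (O : Finset (V × V)) (α : V × V → ℝ)
    (hw : ∀ i j, w i j = w j i)
    (hO1 : ∀ p ∈ O, G.Adj p.1 p.2 ∧ P p.1 ≠ P p.2)
    (hO2 : ∀ i j, G.Adj i j → P i ≠ P j → ((i, j) ∈ O ↔ (j, i) ∉ O))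
    {i j : V} (hij : i ≠ j) (hPij : P i = P j) :
    paramMatrix G w P O α i j = if G.Adj i j then -(w i j) else 0 := by
  rw [paramMatrix_eq G w P O α hw hO1 hO2]
  simp only [Matrix.add_apply]
  rw [sum_entry_eval hij O _ (fun p hp h1 h2 => by
    have hne := (hO1 p hp).1.ne
    simp only [Matrix.smul_apply, smul_eq_mul]
    rw [Dmat_unmatched hne hij h1 h2, mul_zero])]
  have h1 : (i, j) ∉ O := fun h => (hO1 _ h).2 hPij
  have h2 : (j, i) ∉ O := fun h => (hO1 _ h).2 hPij.symm
  rw [if_neg h1, if_neg h2]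
  simp only [signedLaplacian, Matrix.of_apply, if_neg hij]
  by_cases hadj : G.Adj i j
  · rw [if_pos hadj, if_pos hadj]; ring
  · rw [if_neg hadj, if_neg hadj]; ring

end Comb5

section Signs
variable {V : Type*}

lemma walk_sign_pos (G : SimpleGraph V) (ψ : V → ℝ) (hψ : ∀ v, ψ v ≠ 0) {i j : V}
    (p : (G.deleteEdges (nodalEdges G (fun _ _ => 1) ψ)).Walk i j) : 0 < ψ i * ψ j := by
  induction p with
  | nil => exact mul_self_pos.mpr (hψ _)
  | @cons a b c h q ih =>
    have hadj := SimpleGraph.deleteEdges_adj.mp h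
    have h1 : 0 < ψ a * ψ b := by
      have hnotlt : ¬(ψ a * 1 * ψ b < 0) := fun hlt => hadj.2 ⟨a, b, rfl, hadj.1, hlt⟩
      have hge : 0 ≤ ψ a * ψ b := by
        by_contra hc
        push_neg at hc
        exact hnotlt (by rw [mul_one]; exact hc)
      exact lt_of_le_of_ne hge (Ne.symm (mul_ne_zero (hψ a) (hψ b)))
    have hb2 : 0 < ψ b * ψ b := mul_self_pos.mpr (hψ b)
    nlinarith

lemma reachable_sign_pos (G : SimpleGraph V) (ψ : V → ℝ) (hψ : ∀ v, ψ v ≠ 0) {i j : V}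
    (h : (G.deleteEdges (nodalEdges G (fun _ _ => 1) ψ)).Reachable i j) : 0 < ψ i * ψ j := by
  obtain ⟨p⟩ := h
  exact walk_sign_pos G ψ hψ p

lemma adj_cross_sign_neg (G : SimpleGraph V) (ψ : V → ℝ) (hψ : ∀ v, ψ v ≠ 0) {ν : ℕ}
    {P : V → Fin ν}
    (hP : ∀ i j : V, P i = P j ↔ (G.deleteEdges (nodalEdges G (fun _ _ => 1) ψ)).Reachable i j)
    {a b : V} (hadj : G.Adj a b) (hne : P a ≠ P b) : ψ a * ψ b < 0 := by
  by_contra hge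
  push_neg at hge
  have hpos : 0 < ψ a * ψ b := lt_of_le_of_ne hge (Ne.symm (mul_ne_zero (hψ a) (hψ b)))
  have hnot : s(a, b) ∉ nodalEdges G (fun _ _ => 1) ψ := by
    rintro ⟨i', j', hs, hadj', hlt⟩
    rw [Sym2.eq_iff] at hs
    rcases hs with ⟨h1, h2⟩ | ⟨h1, h2⟩
    · subst h1; subst h2; rw [mul_one] at hlt; linarith
    · subst h1; subst h2; rw [mul_one] at hlt; nlinarith
  have hadj' : (G.deleteEdges (nodalEdges G (fun _ _ => 1) ψ)).Adj a b :=
    SimpleGraph.deleteEdges_adj.mpr ⟨hadj, hnot⟩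
  exact hne ((hP a b).mpr hadj'.reachable)

end Signs

/-- Courant-sharp eigenvectors induce globally minimal partitions.
(1) For every `ν`-partition `P̃` of `G` and every positive parameter vector `α`,
`λ_ν ≤ Λ(P̃, α)`, where `λ_ν` is the `ν`-th smallest eigenvalue of the (unsigned) graph
Laplacian `L`. (2) If `ψ` is a non-degenerate eigenvector of `L` with eigenvalue `λ_ν`
having exactly `ν` nodal domains and `P` is its nodal partition, then some positive
parameter vector `α^c` achieves `Λ(P, α^c) = λ_ν`. -/
theorem stmt18 [Fintype V] [DecidableEq V] (G : SimpleGraph V) [DecidableRel G.Adj]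
    (hGconn : G.Connected) (w : V → V → ℝ)
    (hwsymm : ∀ i j, w i j = w j i) (hwpos : ∀ i j, G.Adj i j → 0 < w i j)
    (hw0 : ∀ i j, ¬ G.Adj i j → w i j = 0) :
    (∀ (ν : ℕ) (Pt : V → Fin ν), Function.Surjective Pt →
      (∀ k : Fin ν, (G.induce {v | Pt v = k}).Connected) →
      ∀ O : Finset (V × V), (∀ p ∈ O, G.Adj p.1 p.2 ∧ Pt p.1 ≠ Pt p.2) →
      (∀ i j, G.Adj i j → Pt i ≠ Pt j → ((i, j) ∈ O ↔ (j, i) ∉ O)) →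
      ∀ α : V × V → ℝ, (∀ p ∈ O, 0 < α p) →
        nthEigenvalue (signedLaplacian G w fun _ _ => 1) ν ≤ PartitionEnergy G w Pt O α) ∧
    (∀ (ν : ℕ) (ψ : V → ℝ) (lam : ℝ),
      (signedLaplacian G w fun _ _ => 1).mulVec ψ = lam • ψ →
      (∀ v, ψ v ≠ 0) →
      IsSimpleEigenvalue (signedLaplacian G w fun _ _ => 1) lam →
      lam = nthEigenvalue (signedLaplacian G w fun _ _ => 1) ν →
      nodalCount G (fun _ _ => 1) ψ = ν →
      ∀ P : V → Fin ν, Function.Surjective P →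
      (∀ i j : V, P i = P j ↔
        (G.deleteEdges (nodalEdges G (fun _ _ => 1) ψ)).Reachable i j) →
      ∀ O : Finset (V × V), (∀ p ∈ O, G.Adj p.1 p.2 ∧ P p.1 ≠ P p.2) →
      (∀ i j, G.Adj i j → P i ≠ P j → ((i, j) ∈ O ↔ (j, i) ∉ O)) →
      ∃ αc : V × V → ℝ, (∀ p ∈ O, 0 < αc p) ∧ PartitionEnergy G w P O αc = lam) := by
  classical
  have hVne : Nonempty V := hGconn.nonempty
  have hLsym : ∀ i j, signedLaplacian G w (fun _ _ => 1) i j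
      = signedLaplacian G w (fun _ _ => 1) j i :=
    signedLaplacian_symm G w _ hwsymm (fun _ _ => rfl)
  have hLher : (signedLaplacian G w (fun _ _ => 1)).IsHermitian := isHermitian_of_symm hLsym
  constructor
  · -- Part (1)
    intro ν Pt hsurj _hconn O hO1 hO2 α hα
    obtain ⟨v0⟩ := hVne
    have hν1 : 1 ≤ ν := (Pt v0).pos
    have hνc : ν ≤ Fintype.card V := by
      have := Fintype.card_le_of_surjective Pt hsurj
      simpa using this
    have hid := paramMatrix_eq G w Pt O α hwsymm hO1 hO2
    have hMher := paramMatrix_isHermitian G w Pt O α hwsymm hO1 hO2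
    have hblock : ∀ i j, Pt i ≠ Pt j → paramMatrix G w Pt O α i j = 0 :=
      fun i j hij => paramMatrix_offblock G w Pt O α hwsymm hO1 hO2 hij
    have hcards : ∀ k : Fin ν, 0 < Fintype.card {v : V // Pt v = k} := by
      intro k
      obtain ⟨v, hv⟩ := hsurj k
      exact Fintype.card_pos_iff.mpr ⟨⟨v, hv⟩⟩
    have hBher : ∀ k, (blockMatrix (paramMatrix G w Pt O α) Pt k).IsHermitian :=
      fun k => blockMatrix_isHermitian hMher Pt k
    choose u hu1 hu2 using fun k => exists_min_eigenvector (hBher k) (hcards k)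
    set μ : Fin ν → ℝ := fun k => lam1Block (paramMatrix G w Pt O α) Pt k with hμdef
    set Φ : Fin ν → V → ℝ := fun k v => if h : Pt v = k then u k ⟨v, h⟩ else 0 with hΦdef
    have hΦeig : ∀ k, (paramMatrix G w Pt O α).mulVec (Φ k) = μ k • Φ k := fun k =>
      blockMatrix_mulVec_extend hblock k (u k) (μ k) (hu2 k)
    set Λ := PartitionEnergy G w Pt O α with hΛ
    have hμΛ : ∀ k, μ k ≤ Λ := fun k =>
      le_ciSup (Set.Finite.bddAbove (Set.finite_range _)) k
    have hxat : ∀ (c : Fin ν → ℝ) (v : V), (∑ k, c k • Φ k) v = c (Pt v) * Φ (Pt v) v := by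
      intro c v
      rw [Finset.sum_apply, Finset.sum_eq_single (Pt v)]
      · simp
      · intro l _ hl
        have hz : Φ l v = 0 := by
          rw [hΦdef]; simp only; rw [dif_neg (fun h => hl h.symm)]
        simp [hz]
      · intro h; exact absurd (Finset.mem_univ _) h
    have hli : ∀ c : Fin ν → ℝ, (∑ k, c k • Φ k) = 0 → c = 0 := by
      intro c hc
      funext k
      have hu0 : ∃ s : {v : V // Pt v = k}, u k s ≠ 0 := by
        by_contra hall
        push_neg at hall
        have hz : u k ⬝ᵥ u k = 0 := by
          simp only [dotProduct]
          exact Finset.sum_eq_zero fun s _ => by rw [hall s]; ring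
        rw [hu1 k] at hz; norm_num at hz
      obtain ⟨s, hs⟩ := hu0
      have hcs := congrFun hc s.val
      rw [hxat c s.val, Pi.zero_apply] at hcs
      rw [s.prop] at hcs
      have hΦv : Φ k s.val = u k s := by
        rw [hΦdef]; simp only
        rw [dif_pos s.prop]
      rw [hΦv] at hcs
      have := mul_eq_zero.mp hcs
      simp only [Pi.zero_apply]
      tauto
    have hq : ∀ c : Fin ν → ℝ, (∑ k, c k • Φ k) ⬝ᵥ
        (signedLaplacian G w (fun _ _ => 1)).mulVec (∑ k, c k • Φ k)
        ≤ Λ * ((∑ k, c k • Φ k) ⬝ᵥ (∑ k, c k • Φ k)) := by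
      intro c
      set x : V → ℝ := ∑ k, c k • Φ k with hx
      have hxv : ∀ v, x v = c (Pt v) * Φ (Pt v) v := fun v => by rw [hx]; exact hxat c v
      have hLM : x ⬝ᵥ (signedLaplacian G w (fun _ _ => 1)).mulVec x
          ≤ x ⬝ᵥ (paramMatrix G w Pt O α).mulVec x := by
        rw [hid, Matrix.add_mulVec, dotProduct_add]
        have h0 : 0 ≤ x ⬝ᵥ (∑ p ∈ O, w p.1 p.2 • Dmat p.1 p.2 (α p)).mulVec x := by
          rw [sum_mulVec', dotProduct_sum']
          apply Finset.sum_nonneg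
          intro p hp
          rw [Matrix.smul_mulVec, dotProduct_smul, smul_eq_mul]
          exact mul_nonneg (hwpos _ _ (hO1 p hp).1).le
            (dot_Dmat_nonneg (hO1 p hp).1.ne (hα p hp) x)
        linarith
      have hMx : (paramMatrix G w Pt O α).mulVec x = ∑ k, (c k * μ k) • Φ k := by
        rw [hx, mulVec_sum']
        refine Finset.sum_congr rfl fun k _ => ?_
        rw [Matrix.mulVec_smul, hΦeig k, smul_smul]
      have hMq : x ⬝ᵥ (paramMatrix G w Pt O α).mulVec x ≤ Λ * (x ⬝ᵥ x) := by
        rw [hMx]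
        simp only [dotProduct, Finset.mul_sum]
        apply Finset.sum_le_sum
        intro v _
        rw [hxat (fun k => c k * μ k) v, hxv v]
        have := hμΛ (Pt v)
        nlinarith [sq_nonneg (c (Pt v) * Φ (Pt v) v)]
      linarith
    exact cf_lemma hLher hν1 hνc Λ Φ hli hq
  · -- Part (2)
    intro ν ψ lam heig hψ _hsimple _hlam _hcount P hPsurj hP O hO1 hO2
    obtain ⟨v0⟩ := hVne
    set αc : V × V → ℝ := fun p => if ψ p.1 * ψ p.2 < 0 then -ψ p.2 / ψ p.1 else 1 with hαc
    have hOneg : ∀ p ∈ O, ψ p.1 * ψ p.2 < 0 := fun p hp =>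
      adj_cross_sign_neg G ψ hψ hP (hO1 p hp).1 (hO1 p hp).2
    have hαpos : ∀ p ∈ O, 0 < αc p := by
      intro p hp
      have h := hOneg p hp
      rw [hαc]
      simp only
      rw [if_pos h]
      rcases mul_neg_iff.mp h with ⟨h1, h2⟩ | ⟨h1, h2⟩
      · exact div_pos (by linarith) h1
      · exact div_pos_of_neg_of_neg (by linarith) h1
    refine ⟨αc, hαpos, ?_⟩
    have hid := paramMatrix_eq G w P O αc hwsymm hO1 hO2
    have hMher := paramMatrix_isHermitian G w P O αc hwsymm hO1 hO2
    have hblock : ∀ i j, P i ≠ P j → paramMatrix G w P O αc i j = 0 :=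
      fun i j hij => paramMatrix_offblock G w P O αc hwsymm hO1 hO2 hij
    have hMeig : (paramMatrix G w P O αc).mulVec ψ = lam • ψ := by
      rw [hid, Matrix.add_mulVec]
      have hzero : (∑ p ∈ O, w p.1 p.2 • Dmat p.1 p.2 (αc p)).mulVec ψ = 0 := by
        rw [sum_mulVec']
        apply Finset.sum_eq_zero
        intro p hp
        rw [Matrix.smul_mulVec,
          Dmat_mulVec_zero (hO1 p hp).1.ne (hψ _) (hψ _) ?ha, smul_zero]
        case ha =>
          rw [hαc]; simp only; rw [if_pos (hOneg p hp)]
      rw [hzero, add_zero]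
      exact heig
    have hμ : ∀ k : Fin ν, lam1Block (paramMatrix G w P O αc) P k = lam := by
      intro k
      have hBher := blockMatrix_isHermitian hMher P k
      have hcard : 0 < Fintype.card {v : V // P v = k} := by
        obtain ⟨v, hv⟩ := hPsurj k
        exact Fintype.card_pos_iff.mpr ⟨⟨v, hv⟩⟩
      have hrest := blockMatrix_mulVec_restrict hblock k hMeig
      have hgs : ∀ x : {v : V // P v = k} → ℝ,
          lam * (x ⬝ᵥ x) ≤ x ⬝ᵥ (blockMatrix (paramMatrix G w P O αc) P k).mulVec x := by
        apply ground_state_bound _ (fun s t => herm_symm_entries hBher s t)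
          (fun s => ψ s.val) (fun s => hψ s.val) lam hrest
        intro s t hst
        have hvne : s.val ≠ t.val := fun h => hst (Subtype.ext h)
        have hPst : P s.val = P t.val := s.prop.trans t.prop.symm
        have hBst : blockMatrix (paramMatrix G w P O αc) P k s t
            = if G.Adj s.val t.val then -(w s.val t.val) else 0 := by
          have := paramMatrix_inblock G w P O αc hwsymm hO1 hO2 hvne hPst
          simpa [blockMatrix] using this
        rw [hBst]
        by_cases hadj : G.Adj s.val t.val
        · rw [if_pos hadj]
          have hpos : 0 < ψ s.val * ψ t.val :=
            reachable_sign_pos G ψ hψ ((hP s.val t.val).mp hPst)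
          nlinarith [hwpos s.val t.val hadj]
        · rw [if_neg hadj]; simp
      haveI : Nonempty {v : V // P v = k} := Fintype.card_pos_iff.mp hcard
      have hψk : (0:ℝ) < (fun s : {v : V // P v = k} => ψ s.val) ⬝ᵥ (fun s => ψ s.val) := by
        apply Finset.sum_pos (fun s _ => mul_self_pos.mpr (hψ s.val)) Finset.univ_nonempty
      have h1 : nthEigenvalue (blockMatrix (paramMatrix G w P O αc) P k) 1 ≤ lam := by
        have hr := nthEigenvalue_one_le_rayleigh hBher hcard (fun s => ψ s.val)
        rw [hrest, dotProduct_smul, smul_eq_mul] at hr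
        exact le_of_mul_le_mul_right hr hψk
      have h2 : lam ≤ nthEigenvalue (blockMatrix (paramMatrix G w P O αc) P k) 1 := by
        obtain ⟨uu, huu1, huu2⟩ := exists_min_eigenvector hBher hcard
        have hb := hgs uu
        rw [huu2, dotProduct_smul, smul_eq_mul, huu1, mul_one, mul_one] at hb
        exact hb
      exact le_antisymm h1 h2
    have hν0 : 0 < ν := (P v0).pos
    haveI : Nonempty (Fin ν) := Fin.pos_iff_nonempty.mp hν0
    have hPE : PartitionEnergy G w P O αc
        = ⨆ k : Fin ν, lam1Block (paramMatrix G w P O αc) P k := rfl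
    rw [hPE, funext hμ]
    exact ciSup_const

end
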